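/- In the affine Schur algebra S△(2,2) over ℚ at q = 1, let λ = (2,0), ν = (1,1), and identify T₁ = e_{E△_{1,2}+E△_{2,1}}. Then T₁ + e_ν = e_{E△_{1,1}+E△_{2,1}} · e_{E△_{1,1}+E△_{1,2}} lies in the ideal generated by e_λ, and conversely e_{E△_{1,1}+E△_{1,2}} (T₁ + e_ν) e_{E△_{1,1}+E△_{2,1}} = 4 e_λ, so the two-sided ideal generated by e_λ equals the two-sided ideal generated by T₁ + e_ν and T₂ + e_ν. -/

import Mathlib

noncomputable section

/-- The row vector `row(A) = (Σ_j a_{i,j})_i` of a `ℤ×ℤ` matrix with entries in `ℕ`. -/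
def rowS (A : ℤ → ℤ → ℕ) (i : ℤ) : ℕ := ∑ᶠ j, A i j

/-- The column vector `col(A) = (Σ_i a_{i,j})_j`. -/
def colS (A : ℤ → ℤ → ℕ) (j : ℤ) : ℕ := ∑ᶠ i, A i j

/-- `Θ△(n,r)`: the set of `ℤ×ℤ` matrices over `ℕ` with `a_{i,j} = a_{i+n,j+n}`, finitely
many nonzero entries in each row and column, and total entry sum `r` over `n` consecutive
rows (equivalently columns). -/
def ThetaAff (n r : ℕ) : Set (ℤ → ℤ → ℕ) :=
  {A | (∀ i j, A (i + n) (j + n) = A i j) ∧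
       (∀ i, (Function.support (A i)).Finite) ∧
       (∀ j, (Function.support fun i => A i j).Finite) ∧
       (∑ i ∈ Finset.Icc (1 : ℤ) (n : ℤ), rowS A i) = r ∧
       (∑ j ∈ Finset.Icc (1 : ℤ) (n : ℤ), colS A j) = r}

/-- `Λ△(n,r)`: `n`-periodic sequences of natural numbers summing to `r` over a period. -/
def LambdaAff (n r : ℕ) : Set (ℤ → ℕ) :=
  {l | (∀ i, l (i + n) = l i) ∧ (∑ i ∈ Finset.Icc (1 : ℤ) (n : ℤ), l i) = r}

/-- The diagonal matrix `diag(λ)` attached to `λ ∈ Λ△(n,r)`. -/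
def diagM (l : ℤ → ℕ) : ℤ → ℤ → ℕ := fun i j => if i = j then l i else 0

/-- The `n`-periodic elementary matrix `E△_{i,j}`, with `1` at the positions
`(i + sn, j + sn)`, `s ∈ ℤ`. -/
def Edel (n : ℕ) (i j : ℤ) : ℤ → ℤ → ℕ :=
  fun x y => if x - i = y - j ∧ (n : ℤ) ∣ (x - i) then 1 else 0

/-- `Λ(∞, m)`: finitely supported sequences `t : ℤ → ℕ` with `Σ t = m`. -/
def CompInf (m : ℕ) : Set (ℤ → ℕ) :=
  {t | (Function.support t).Finite ∧ ∑ᶠ u, t u = m}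

/-- `A + Σ_u t_u (E△_{h,u} - E△_{h+1,u})`. -/
def rowAdd (n : ℕ) (h : ℤ) (t : ℤ → ℕ) (A : ℤ → ℤ → ℕ) : ℤ → ℤ → ℕ :=
  fun x y => A x y + (if (n : ℤ) ∣ (x - h) then t (y - x + h) else 0)
               - (if (n : ℤ) ∣ (x - (h + 1)) then t (y - x + (h + 1)) else 0)

/-- `A - Σ_u t_u (E△_{h,u} - E△_{h+1,u})`. -/
def rowSub (n : ℕ) (h : ℤ) (t : ℤ → ℕ) (A : ℤ → ℤ → ℕ) : ℤ → ℤ → ℕ :=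
  fun x y => A x y + (if (n : ℤ) ∣ (x - (h + 1)) then t (y - x + (h + 1)) else 0)
               - (if (n : ℤ) ∣ (x - h) then t (y - x + h) else 0)

/-- `A + Σ_u t_u (E△_{u,h+1} - E△_{u,h})`. -/
def colAdd (n : ℕ) (h : ℤ) (t : ℤ → ℕ) (A : ℤ → ℤ → ℕ) : ℤ → ℤ → ℕ :=
  fun x y => A x y + (if (n : ℤ) ∣ (y - (h + 1)) then t (x - y + (h + 1)) else 0)
               - (if (n : ℤ) ∣ (y - h) then t (x - y + h) else 0)

/-- `A - Σ_u t_u (E△_{u,h+1} - E△_{u,h})`. -/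
def colSub (n : ℕ) (h : ℤ) (t : ℤ → ℕ) (A : ℤ → ℤ → ℕ) : ℤ → ℤ → ℕ :=
  fun x y => A x y + (if (n : ℤ) ∣ (y - h) then t (x - y + h) else 0)
               - (if (n : ℤ) ∣ (y - (h + 1)) then t (x - y + (h + 1)) else 0)

/-- An algebra `S` realizing the affine Schur algebra `S△(n,r)` over `ℚ` at `q = 1`:
it has a basis `{e_A : A ∈ Θ△(n,r)}` whose structure constants vanish unless
`col(A) = row(A')`, diagonal basis elements act as partial identities, and the transpose
of matrices induces an involutory anti-automorphism `τ`. -/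
structure AffineSchurAlg (n r : ℕ) (S : Type) [Ring S] [Algebra ℚ S] where
  /-- the basis elements `e_A` (extended by `0` off `Θ△(n,r)`) -/
  e : (ℤ → ℤ → ℕ) → S
  indep : LinearIndependent ℚ (fun A : ThetaAff n r => e A.1)
  span_eq_top : Submodule.span ℚ (e '' ThetaAff n r) = ⊤
  vanish : ∀ A, A ∉ ThetaAff n r → e A = 0
  mul_disjoint : ∀ A B, A ∈ ThetaAff n r → B ∈ ThetaAff n r →
    colS A ≠ rowS B → e A * e B = 0
  diag_row : ∀ A ∈ ThetaAff n r, e (diagM (rowS A)) * e A = e A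
  diag_col : ∀ A ∈ ThetaAff n r, e A * e (diagM (colS A)) = e A
  /-- the anti-involution `e_A ↦ e_{Aᵀ}` -/
  tau : S →ₗ[ℚ] S
  tau_mul : ∀ a b : S, tau (a * b) = tau b * tau a
  tau_invol : ∀ a : S, tau (tau a) = a
  tau_e : ∀ A, tau (e A) = e (fun x y => A y x)

/-- An algebra realizing the affine Schur algebra `S△(2,2)` over `ℚ` at `q = 1`,
together with the multiplication formulas of Lusztig and of Du–Deng–Fu
(Propositions 2.5, 2.6, 2.7 of the paper, for `n = 2`), and the shift formulas
(multiplication by `e_{2E△_{1,3}}` and `e_{2E△_{3,1}}`) coming from the Hecke-algebra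
description. -/
structure AffineSchur22 (S : Type) [Ring S] [Algebra ℚ S] extends
    AffineSchurAlg 2 2 S where
  /-- Proposition 2.5(1): multiplication by `e_{B_m}`,
  `B_m = diag(λ) + m E△_{h,h+1} - m E△_{h+1,h+1}`, `λ = row(A)`. -/
  lusztig_row_plus : ∀ (h : ℤ) (m : ℕ), ∀ A ∈ ThetaAff 2 2, m ≤ rowS A (h + 1) →
    e (fun x y => diagM (rowS A) x y + m * Edel 2 h (h + 1) x y
        - m * Edel 2 (h + 1) (h + 1) x y) * e A
      = ∑ᶠ t ∈ {t | t ∈ CompInf m ∧ ∀ u, t u ≤ A (h + 1) u},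
          ((∏ᶠ u, Nat.choose (A h u + t u) (t u) : ℕ) : ℚ) • e (rowAdd 2 h t A)
  /-- Proposition 2.5(2): multiplication by `e_{C_m}`,
  `C_m = diag(λ) - m E△_{h,h} + m E△_{h+1,h}`, `λ = row(A)`. -/
  lusztig_row_minus : ∀ (h : ℤ) (m : ℕ), ∀ A ∈ ThetaAff 2 2, m ≤ rowS A h →
    e (fun x y => diagM (rowS A) x y - m * Edel 2 h h x y
        + m * Edel 2 (h + 1) h x y) * e A
      = ∑ᶠ t ∈ {t | t ∈ CompInf m ∧ ∀ u, t u ≤ A h u},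
          ((∏ᶠ u, Nat.choose (A (h + 1) u + t u) (t u) : ℕ) : ℚ) • e (rowSub 2 h t A)
  /-- Proposition 2.6(1): right multiplication by `e_{B_m}`,
  `B_m = diag(λ) + m E△_{h,h+1} - m E△_{h,h}`, `λ = col(A)`. -/
  lusztig_col_plus : ∀ (h : ℤ) (m : ℕ), ∀ A ∈ ThetaAff 2 2, m ≤ colS A h →
    e A * e (fun x y => diagM (colS A) x y + m * Edel 2 h (h + 1) x y
        - m * Edel 2 h h x y)
      = ∑ᶠ t ∈ {t | t ∈ CompInf m ∧ ∀ u, t u ≤ A u h},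
          ((∏ᶠ u, Nat.choose (A u (h + 1) + t u) (t u) : ℕ) : ℚ) • e (colAdd 2 h t A)
  /-- Proposition 2.6(2): right multiplication by `e_{C_m}`,
  `C_m = diag(λ) - m E△_{h+1,h+1} + m E△_{h+1,h}`, `λ = col(A)`. -/
  lusztig_col_minus : ∀ (h : ℤ) (m : ℕ), ∀ A ∈ ThetaAff 2 2, m ≤ colS A (h + 1) →
    e A * e (fun x y => diagM (colS A) x y - m * Edel 2 (h + 1) (h + 1) x y
        + m * Edel 2 (h + 1) h x y)
      = ∑ᶠ t ∈ {t | t ∈ CompInf m ∧ ∀ u, t u ≤ A u (h + 1)},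
          ((∏ᶠ u, Nat.choose (A u h + t u) (t u) : ℕ) : ℚ) • e (colSub 2 h t A)
  /-- Proposition 2.7: multiplication by `e_{D_m}`,
  `D_m = diag(λ) - E△_{h,h} + E△_{h,h+mn}`, `λ = row(A)`, `m ≠ 0`. -/
  lusztig_shift : ∀ (h : ℤ) (m : ℤ), m ≠ 0 → ∀ A ∈ ThetaAff 2 2, 1 ≤ rowS A h →
    e (fun x y => diagM (rowS A) x y - Edel 2 h h x y + Edel 2 h (h + 2 * m) x y) * e A
      = ∑ᶠ u ∈ {u : ℤ | 1 ≤ A h u},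
          ((A h (u + 2 * m) + 1 : ℕ) : ℚ) •
            e (fun x y => A x y + Edel 2 h (u + 2 * m) x y - Edel 2 h u x y)
  /-- multiplication by `e_{2E△_{1,3}}` shifts both column indices by `2`
  (Proposition 2.8 of the paper). -/
  x2_shift : ∀ i j : ℤ,
    e (fun x y => 2 * Edel 2 1 3 x y) * e (fun x y => Edel 2 1 i x y + Edel 2 1 j x y)
      = e (fun x y => Edel 2 1 (i + 2) x y + Edel 2 1 (j + 2) x y)
  /-- multiplication by `e_{2E△_{3,1}}` shifts both column indices by `-2`. -/
  x2inv_shift : ∀ i j : ℤ,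
    e (fun x y => 2 * Edel 2 3 1 x y) * e (fun x y => Edel 2 1 i x y + Edel 2 1 j x y)
      = e (fun x y => Edel 2 1 (i - 2) x y + Edel 2 1 (j - 2) x y)

/-- The weight `λ = (2,0) ∈ Λ△(2,2)`. -/
def lam0 : ℤ → ℕ := fun i => if (2 : ℤ) ∣ (i - 1) then 2 else 0

/-- The weight `μ = (0,2) ∈ Λ△(2,2)`. -/
def mu0 : ℤ → ℕ := fun i => if (2 : ℤ) ∣ (i - 2) then 2 else 0

/-- The weight `ν = (1,1) ∈ Λ△(2,2)`. -/
def nu0 : ℤ → ℕ := fun _ => 1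

/-- The matrix `E△_{i,j} + E△_{k,l}` (for `n = 2`). -/
def Mat2 (i j k l : ℤ) : ℤ → ℤ → ℕ := fun x y => Edel 2 i j x y + Edel 2 k l x y

end



/-- delta function -/
def dl (u : ℤ) : ℤ → ℕ := fun x => if x = u then 1 else 0

lemma dl_self (u : ℤ) : dl u u = 1 := by simp [dl]

lemma dl_ne {u x : ℤ} (h : x ≠ u) : dl u x = 0 := by simp [dl, h]

lemma dl_mem_compinf (u : ℤ) : dl u ∈ CompInf 1 := by
  constructor
  · exact (Set.finite_singleton u).subset (by
      intro x hx
      simp only [Function.mem_support, dl] at hx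
      by_contra hc
      exact hx (if_neg (by simpa using hc)))
  · rw [finsum_eq_single _ u (fun x hx => dl_ne hx), dl_self]

lemma compinf_one {t : ℤ → ℕ} (h : t ∈ CompInf 1) : ∃ u, t = dl u := by
  obtain ⟨hfin, hsum⟩ := h
  rw [finsum_eq_sum _ hfin] at hsum
  have hex : ∃ u ∈ hfin.toFinset, t u ≠ 0 := by
    by_contra hc
    push_neg at hc
    rw [Finset.sum_eq_zero hc] at hsum
    omega
  obtain ⟨u, hus, hu⟩ := hex
  refine ⟨u, funext fun x => ?_⟩
  by_cases hx : x = u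
  · subst hx
    have h1 : t x ≤ ∑ y ∈ hfin.toFinset, t y :=
      Finset.single_le_sum (fun i _ => Nat.zero_le _) hus
    rw [dl_self]; omega
  · rw [dl_ne hx]
    by_contra hc
    have hxs : x ∈ hfin.toFinset := by
      simp only [Set.Finite.mem_toFinset, Function.mem_support]; exact hc
    have h2 := Finset.add_sum_erase hfin.toFinset t hus
    have h3 : t x ≤ ∑ y ∈ hfin.toFinset.erase u, t y :=
      Finset.single_le_sum (fun i _ => Nat.zero_le _)
        (Finset.mem_erase.mpr ⟨hx, hxs⟩)
    omega

lemma set_eq_pair (g : ℤ → ℕ) (a b : ℤ) (hab : a ≠ b)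
    (hg : ∀ u, 1 ≤ g u ↔ (u = a ∨ u = b)) :
    {t | t ∈ CompInf 1 ∧ ∀ u, t u ≤ g u} = {dl a, dl b} := by
  ext t
  simp only [Set.mem_setOf_eq, Set.mem_insert_iff, Set.mem_singleton_iff]
  constructor
  · rintro ⟨h1, h2⟩
    obtain ⟨u, rfl⟩ := compinf_one h1
    have hu : 1 ≤ g u := le_trans (by rw [dl_self]) (h2 u)
    rcases (hg u).1 hu with rfl | rfl
    · left; rfl
    · right; rfl
  · rintro (rfl | rfl) <;> refine ⟨dl_mem_compinf _, fun u => ?_⟩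
    · by_cases h : u = a
      · subst h; rw [dl_self]; exact (hg u).2 (Or.inl rfl)
      · rw [dl_ne h]; exact Nat.zero_le _
    · by_cases h : u = b
      · subst h; rw [dl_self]; exact (hg u).2 (Or.inr rfl)
      · rw [dl_ne h]; exact Nat.zero_le _

lemma set_eq_single (g : ℤ → ℕ) (a : ℤ)
    (hg : ∀ u, 1 ≤ g u ↔ u = a) :
    {t | t ∈ CompInf 1 ∧ ∀ u, t u ≤ g u} = {dl a} := by
  ext t
  simp only [Set.mem_setOf_eq, Set.mem_singleton_iff]
  constructor
  · rintro ⟨h1, h2⟩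
    obtain ⟨u, rfl⟩ := compinf_one h1
    have hu : 1 ≤ g u := le_trans (by rw [dl_self]) (h2 u)
    rw [(hg u).1 hu]
  · rintro rfl
    refine ⟨dl_mem_compinf _, fun u => ?_⟩
    by_cases h : u = a
    · subst h; rw [dl_self]; exact (hg u).2 rfl
    · rw [dl_ne h]; exact Nat.zero_le _

lemma finprod_choose (g : ℤ → ℕ) (a : ℤ) :
    (∏ᶠ u, Nat.choose (g u + dl a u) (dl a u)) = g a + 1 := by
  rw [finprod_eq_single _ a (fun x hx => by rw [dl_ne hx]; simp)]
  rw [dl_self, Nat.choose_one_right]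

lemma dl_ne_dl {a b : ℤ} (h : a ≠ b) : dl a ≠ dl b := by
  intro hc
  have := congrFun hc a
  rw [dl_self, dl_ne h] at this
  omega

lemma edel_row_support (i j x : ℤ) : (Function.support fun y => Edel 2 i j x y).Finite := by
  apply (Set.finite_singleton (x - i + j)).subset
  intro y hy
  simp only [Function.mem_support, Edel] at hy
  simp only [Set.mem_singleton_iff]
  by_contra hc
  exact hy (if_neg (by omega))

lemma edel_col_support (i j y : ℤ) : (Function.support fun x => Edel 2 i j x y).Finite := by
  apply (Set.finite_singleton (y - j + i)).subset
  intro x hx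
  simp only [Function.mem_support, Edel] at hx
  simp only [Set.mem_singleton_iff]
  by_contra hc
  exact hx (if_neg (by omega))

lemma finsum_edel_row (i j x : ℤ) :
    (∑ᶠ y, Edel 2 i j x y) = if (2:ℤ) ∣ (x - i) then 1 else 0 := by
  by_cases h : (2:ℤ) ∣ (x - i)
  · rw [finsum_eq_single _ (x - i + j) (fun y hy => by
      simp only [Edel]; exact if_neg (by omega))]
    simp only [Edel, if_pos h]
    rw [if_pos ⟨by ring, h⟩]
  · rw [if_neg h]
    apply finsum_eq_zero_of_forall_eq_zero
    intro y
    simp only [Edel]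
    exact if_neg (by omega)

lemma finsum_edel_col (i j y : ℤ) :
    (∑ᶠ x, Edel 2 i j x y) = if (2:ℤ) ∣ (y - j) then 1 else 0 := by
  by_cases h : (2:ℤ) ∣ (y - j)
  · rw [finsum_eq_single _ (y - j + i) (fun x hx => by
      simp only [Edel]; exact if_neg (by omega))]
    simp only [Edel]
    rw [if_pos ⟨by ring, by omega⟩, if_pos h]
  · rw [if_neg h]
    apply finsum_eq_zero_of_forall_eq_zero
    intro x
    simp only [Edel]
    exact if_neg (by omega)

lemma rowS_mat2 (i j k l x : ℤ) :
    rowS (Mat2 i j k l) x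
      = (if (2:ℤ) ∣ (x - i) then 1 else 0) + (if (2:ℤ) ∣ (x - k) then 1 else 0) := by
  unfold rowS Mat2
  rw [finsum_add_distrib (edel_row_support i j x) (edel_row_support k l x),
    finsum_edel_row, finsum_edel_row]

lemma colS_mat2 (i j k l y : ℤ) :
    colS (Mat2 i j k l) y
      = (if (2:ℤ) ∣ (y - j) then 1 else 0) + (if (2:ℤ) ∣ (y - l) then 1 else 0) := by
  unfold colS Mat2
  rw [finsum_add_distrib (edel_col_support i j y) (edel_col_support k l y),
    finsum_edel_col, finsum_edel_col]

lemma icc12 : Finset.Icc (1 : ℤ) ((2:ℕ) : ℤ) = {1, 2} := rfl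

lemma mat2_mem (i j k l : ℤ) : Mat2 i j k l ∈ ThetaAff 2 2 := by
  refine ⟨?_, ?_, ?_, ?_, ?_⟩
  · intro x y
    simp only [Mat2, Edel]
    split_ifs <;> omega
  · intro x
    apply ((edel_row_support i j x).union (edel_row_support k l x)).subset
    intro y hy
    simp only [Function.mem_support, Mat2] at hy
    simp only [Set.mem_union, Function.mem_support]
    omega
  · intro y
    apply ((edel_col_support i j y).union (edel_col_support k l y)).subset
    intro x hx
    simp only [Function.mem_support, Mat2] at hx
    simp only [Set.mem_union, Function.mem_support]
    omega
  · rw [icc12, Finset.sum_insert (by decide), Finset.sum_singleton,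
      rowS_mat2, rowS_mat2]
    split_ifs <;> omega
  · rw [icc12, Finset.sum_insert (by decide), Finset.sum_singleton,
      colS_mat2, colS_mat2]
    split_ifs <;> omega

section Mult

variable {S : Type} [Ring S] [Algebra ℚ S] (H : AffineSchur22 S)

lemma hdiag_nu : diagM nu0 = Mat2 1 1 2 2 := by
  funext x y
  simp only [diagM, nu0, Mat2, Edel]
  split_ifs <;> omega

lemma hdiag_lam : diagM lam0 = Mat2 1 1 1 1 := by
  funext x y
  simp only [diagM, lam0, Mat2, Edel]
  split_ifs <;> omega

lemma mem_lam : diagM lam0 ∈ ThetaAff 2 2 := by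
  rw [hdiag_lam]; exact mat2_mem 1 1 1 1

lemma rowS_diag_lam : rowS (diagM lam0) = lam0 := by
  funext x
  rw [hdiag_lam, rowS_mat2]
  simp only [lam0]
  split_ifs <;> omega

lemma colS_P : colS (Mat2 1 1 2 1) = lam0 := by
  funext y
  rw [colS_mat2]
  simp only [lam0]
  split_ifs <;> omega

lemma colS_C : colS (Mat2 1 1 2 3) = lam0 := by
  funext y
  rw [colS_mat2]
  simp only [lam0]
  split_ifs <;> omega

/-- M4 -/
lemma elam_sq : H.e (diagM lam0) * H.e (diagM lam0) = H.e (diagM lam0) := by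
  have := H.diag_row (diagM lam0) mem_lam
  rwa [rowS_diag_lam] at this

/-- M5 -/
lemma eP_elam : H.e (Mat2 1 1 2 1) * H.e (diagM lam0) = H.e (Mat2 1 1 2 1) := by
  have := H.diag_col (Mat2 1 1 2 1) (mat2_mem 1 1 2 1)
  rwa [colS_P] at this

/-- M6 -/
lemma eC_elam : H.e (Mat2 1 1 2 3) * H.e (diagM lam0) = H.e (Mat2 1 1 2 3) := by
  have := H.diag_col (Mat2 1 1 2 3) (mat2_mem 1 1 2 3)
  rwa [colS_C] at this

/-- M1 -/
lemma M1 : H.e (Mat2 1 1 2 1) * H.e (Mat2 1 1 1 2)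
    = H.e (Mat2 1 2 2 1) + H.e (diagM nu0) := by
  have key := H.lusztig_row_minus 1 1 (Mat2 1 1 1 2) (mat2_mem 1 1 1 2)
    (by rw [rowS_mat2]; split_ifs <;> omega)
  have hfun : (fun x y => diagM (rowS (Mat2 1 1 1 2)) x y - 1 * Edel 2 1 1 x y
      + 1 * Edel 2 (1 + 1) 1 x y) = Mat2 1 1 2 1 := by
    funext x y
    simp only [diagM, rowS_mat2, Mat2, Edel, one_mul]
    split_ifs <;> omega
  have hset : {t | t ∈ CompInf 1 ∧ ∀ u, t u ≤ Mat2 1 1 1 2 1 u} = {dl 1, dl 2} :=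
    set_eq_pair _ 1 2 (by decide) (by
      intro u
      simp only [Mat2, Edel]
      split_ifs <;> omega)
  rw [hfun] at key
  simp only [hset] at key
  rw [finsum_mem_pair (dl_ne_dl (by decide))] at key
  have hc1 : (∏ᶠ u, Nat.choose (Mat2 1 1 1 2 (1 + 1) u + dl 1 u) (dl 1 u)) = 1 := by
    rw [finprod_choose]
    have : Mat2 1 1 1 2 (1 + 1) 1 = 0 := by decide
    omega
  have hc2 : (∏ᶠ u, Nat.choose (Mat2 1 1 1 2 (1 + 1) u + dl 2 u) (dl 2 u)) = 1 := by
    rw [finprod_choose]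
    have : Mat2 1 1 1 2 (1 + 1) 2 = 0 := by decide
    omega
  have hr1 : rowSub 2 1 (dl 1) (Mat2 1 1 1 2) = Mat2 1 2 2 1 := by
    funext x y
    simp only [rowSub, Mat2, Edel, dl]
    split_ifs <;> omega
  have hr2 : rowSub 2 1 (dl 2) (Mat2 1 1 1 2) = diagM nu0 := by
    funext x y
    simp only [rowSub, Mat2, Edel, dl, diagM, nu0]
    split_ifs <;> omega
  rw [hc1, hc2, hr1, hr2] at key
  simpa using key

/-- M2 -/
lemma M2 : H.e (Mat2 1 1 1 2) * H.e (Mat2 1 1 2 1)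
    = ((2:ℕ) : ℚ) • H.e (diagM lam0) := by
  have key := H.lusztig_row_plus 1 1 (Mat2 1 1 2 1) (mat2_mem 1 1 2 1)
    (by rw [rowS_mat2]; split_ifs <;> omega)
  have hfun : (fun x y => diagM (rowS (Mat2 1 1 2 1)) x y + 1 * Edel 2 1 (1 + 1) x y
      - 1 * Edel 2 (1 + 1) (1 + 1) x y) = Mat2 1 1 1 2 := by
    funext x y
    simp only [diagM, rowS_mat2, Mat2, Edel, one_mul]
    split_ifs <;> omega
  have hset : {t | t ∈ CompInf 1 ∧ ∀ u, t u ≤ Mat2 1 1 2 1 (1 + 1) u} = {dl 1} :=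
    set_eq_single _ 1 (by
      intro u
      simp only [Mat2, Edel]
      split_ifs <;> omega)
  rw [hfun] at key
  simp only [hset] at key
  rw [finsum_mem_singleton] at key
  have hc1 : (∏ᶠ u, Nat.choose (Mat2 1 1 2 1 1 u + dl 1 u) (dl 1 u)) = 2 := by
    rw [finprod_choose]
    have : Mat2 1 1 2 1 1 1 = 1 := by decide
    omega
  have hr1 : rowAdd 2 1 (dl 1) (Mat2 1 1 2 1) = diagM lam0 := by
    funext x y
    simp only [rowAdd, Mat2, Edel, dl, diagM, lam0]
    split_ifs <;> omega
  rw [hc1, hr1] at key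
  exact key

/-- M3 -/
lemma M3 : H.e (Mat2 1 1 2 3) * H.e (Mat2 1 0 1 1)
    = H.e (Mat2 2 3 3 2) + H.e (diagM nu0) := by
  have key := H.lusztig_row_plus 2 1 (Mat2 1 0 1 1) (mat2_mem 1 0 1 1)
    (by rw [rowS_mat2]; split_ifs <;> omega)
  have hfun : (fun x y => diagM (rowS (Mat2 1 0 1 1)) x y + 1 * Edel 2 2 (2 + 1) x y
      - 1 * Edel 2 (2 + 1) (2 + 1) x y) = Mat2 1 1 2 3 := by
    funext x y
    simp only [diagM, rowS_mat2, Mat2, Edel, one_mul]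
    split_ifs <;> omega
  have hset : {t | t ∈ CompInf 1 ∧ ∀ u, t u ≤ Mat2 1 0 1 1 (2 + 1) u} = {dl 2, dl 3} :=
    set_eq_pair _ 2 3 (by decide) (by
      intro u
      simp only [Mat2, Edel]
      split_ifs <;> omega)
  rw [hfun] at key
  simp only [hset] at key
  rw [finsum_mem_pair (dl_ne_dl (by decide))] at key
  have hc1 : (∏ᶠ u, Nat.choose (Mat2 1 0 1 1 2 u + dl 2 u) (dl 2 u)) = 1 := by
    rw [finprod_choose]
    have : Mat2 1 0 1 1 2 2 = 0 := by decide
    omega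
  have hc2 : (∏ᶠ u, Nat.choose (Mat2 1 0 1 1 2 u + dl 3 u) (dl 3 u)) = 1 := by
    rw [finprod_choose]
    have : Mat2 1 0 1 1 2 3 = 0 := by decide
    omega
  have hr1 : rowAdd 2 2 (dl 2) (Mat2 1 0 1 1) = diagM nu0 := by
    funext x y
    simp only [rowAdd, Mat2, Edel, dl, diagM, nu0]
    split_ifs <;> omega
  have hr2 : rowAdd 2 2 (dl 3) (Mat2 1 0 1 1) = Mat2 2 3 3 2 := by
    funext x y
    simp only [rowAdd, Mat2, Edel, dl]
    split_ifs <;> omega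
  rw [hc1, hc2, hr1, hr2] at key
  rw [key]
  simp [add_comm]

end Mult


/-- from Lemma 4.1 of the paper. In `S△(2,2)` over `ℚ` at `q = 1`,
with `λ = (2,0)`, `ν = (1,1)`, and `T₁ = e_{E△_{1,2}+E△_{2,1}}`,
`T₂ = e_{E△_{2,3}+E△_{3,2}}`:
`T₁ + e_ν = e_{E△_{1,1}+E△_{2,1}} ⬝ e_{E△_{1,1}+E△_{1,2}}` lies in the two-sided ideal
generated by `e_λ`; conversely
`e_{E△_{1,1}+E△_{1,2}} (T₁ + e_ν) e_{E△_{1,1}+E△_{2,1}} = 4 e_λ`; hence the two-sided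
ideal generated by `e_λ` equals the two-sided ideal generated by `T₁ + e_ν` and
`T₂ + e_ν`. -/
theorem ideal_e_lam_eq_ideal_T1_T2 (S : Type) [Ring S] [Algebra ℚ S]
    (H : AffineSchur22 S) :
    (H.e (Mat2 1 1 2 1) * H.e (Mat2 1 1 1 2) = H.e (Mat2 1 2 2 1) + H.e (diagM nu0)) ∧
    (H.e (Mat2 1 2 2 1) + H.e (diagM nu0) ∈
      Submodule.span ℚ {y : S | ∃ a b : S, y = a * H.e (diagM lam0) * b}) ∧
    (H.e (Mat2 1 1 1 2) * (H.e (Mat2 1 2 2 1) + H.e (diagM nu0)) * H.e (Mat2 1 1 2 1)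
      = (4 : ℚ) • H.e (diagM lam0)) ∧
    (Submodule.span ℚ {y : S | ∃ a b : S, y = a * H.e (diagM lam0) * b} =
      Submodule.span ℚ {y : S | ∃ a b : S,
        y = a * (H.e (Mat2 1 2 2 1) + H.e (diagM nu0)) * b ∨
        y = a * (H.e (Mat2 2 3 3 2) + H.e (diagM nu0)) * b}) := by
  have m1 := M1 H
  have m2 := M2 H
  have m3 := M3 H
  have m4 := elam_sq H
  have m5 := eP_elam H
  have m6 := eC_elam H
  have m4' : ∀ x : S, H.e (diagM lam0) * (H.e (diagM lam0) * x) = H.e (diagM lam0) * x :=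
    fun x => by rw [← mul_assoc, m4]
  have part3 : H.e (Mat2 1 1 1 2) * (H.e (Mat2 1 2 2 1) + H.e (diagM nu0))
      * H.e (Mat2 1 1 2 1) = (4 : ℚ) • H.e (diagM lam0) := by
    rw [← m1]
    have hassoc : H.e (Mat2 1 1 1 2) * (H.e (Mat2 1 1 2 1) * H.e (Mat2 1 1 1 2))
        * H.e (Mat2 1 1 2 1)
        = (H.e (Mat2 1 1 1 2) * H.e (Mat2 1 1 2 1))
          * (H.e (Mat2 1 1 1 2) * H.e (Mat2 1 1 2 1)) := by
      simp only [mul_assoc]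
    rw [hassoc, m2, smul_mul_assoc, mul_smul_comm, m4, smul_smul]
    norm_num
  refine ⟨m1, ?_, part3, ?_⟩
  · apply Submodule.subset_span
    exact ⟨H.e (Mat2 1 1 2 1), H.e (Mat2 1 1 1 2), by rw [m5, m1]⟩
  · have hd : H.e (diagM lam0) = (4:ℚ)⁻¹ • (H.e (Mat2 1 1 1 2)
        * (H.e (Mat2 1 2 2 1) + H.e (diagM nu0)) * H.e (Mat2 1 1 2 1)) := by
      rw [part3, smul_smul]
      norm_num
    apply le_antisymm
    · apply Submodule.span_le.2
      rintro y ⟨a, b, rfl⟩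
      have heq : a * H.e (diagM lam0) * b
          = (4:ℚ)⁻¹ • ((a * H.e (Mat2 1 1 1 2))
            * (H.e (Mat2 1 2 2 1) + H.e (diagM nu0)) * (H.e (Mat2 1 1 2 1) * b)) := by
        rw [hd, mul_smul_comm, smul_mul_assoc]
        congr 1
        simp only [mul_assoc]
      rw [heq]
      exact Submodule.smul_mem _ _ (Submodule.subset_span
        ⟨a * H.e (Mat2 1 1 1 2), H.e (Mat2 1 1 2 1) * b, Or.inl rfl⟩)
    · apply Submodule.span_le.2
      rintro y ⟨a, b, (rfl | rfl)⟩
      · have heq : a * (H.e (Mat2 1 2 2 1) + H.e (diagM nu0)) * b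
            = (a * H.e (Mat2 1 1 2 1)) * H.e (diagM lam0) * (H.e (Mat2 1 1 1 2) * b) := by
          rw [← m1, ← m5]
          simp only [mul_assoc, m4']
        rw [heq]
        exact Submodule.subset_span
          ⟨a * H.e (Mat2 1 1 2 1), H.e (Mat2 1 1 1 2) * b, rfl⟩
      · have heq : a * (H.e (Mat2 2 3 3 2) + H.e (diagM nu0)) * b
            = (a * H.e (Mat2 1 1 2 3)) * H.e (diagM lam0) * (H.e (Mat2 1 0 1 1) * b) := by
          rw [← m3, ← m6]
          simp only [mul_assoc, m4']
        rw [heq]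
        exact Submodule.subset_span
          ⟨a * H.e (Mat2 1 1 2 3), H.e (Mat2 1 0 1 1) * b, rfl⟩
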